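/- arXiv:1106.3836 — 3 statements merged into one kernel-verified Lean document; each statement's English description precedes it below -/
import Mathlib

section
/- Every Čech-complete space contains a non-empty compact subset of countable character. -/
open Set

universe u

/-- A compact set `F` has countable character in `X`: there is a countable family of open
neighborhoods of `F` such that every open set containing `F` contains a member of it. -/
def HasCountableChar {X : Type*} [TopologicalSpace X] (A : Set X) : Prop :=
  ∃ U : ℕ → Set X, (∀ n, IsOpen (U n) ∧ A ⊆ U n) ∧
    ∀ V : Set X, IsOpen V → A ⊆ V → ∃ n, U n ⊆ V

/-- A Tychonoff space is Čech-complete if it embeds densely into a compact Hausdorff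
space as a Gδ subset. -/
def CechComplete (X : Type u) [TopologicalSpace X] : Prop :=
  ∃ (B : Type u) (tB : TopologicalSpace B) (e : X → B),
    CompactSpace B ∧ T2Space B ∧ Topology.IsEmbedding e ∧ DenseRange e ∧ IsGδ (Set.range e)

/-- every (nonempty) Čech-complete space contains a nonempty compact subset
of countable character. -/
theorem stmt14 {X : Type u} [TopologicalSpace X] [T35Space X] [Nonempty X]
    (h : CechComplete X) :
    ∃ F : Set X, F.Nonempty ∧ IsCompact F ∧ HasCountableChar F := by
  obtain ⟨B, tB, e, hcomp, ht2, hemb, hdense, hGδ⟩ := h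
  obtain ⟨G, hGopen, hGeq⟩ := hGδ.eq_iInter_nat
  obtain ⟨pt⟩ := ‹Nonempty X›
  set x₀ : B := e pt with hx₀
  have hx₀r : x₀ ∈ range e := mem_range_self pt
  have hx₀G : ∀ n, x₀ ∈ G n := by
    intro n
    have := hGeq ▸ hx₀r
    exact mem_iInter.mp this n
  -- step of the recursion
  have hstep : ∀ (n : ℕ) (W : Set B), IsOpen W → x₀ ∈ W →
      ∃ W', IsOpen W' ∧ x₀ ∈ W' ∧ closure W' ⊆ W ∩ G n := by
    intro n W hW hxW
    obtain ⟨W', hW'open, hsub, hcl⟩ := normal_exists_closure_subset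
      (isClosed_singleton (x := x₀)) (hW.inter (hGopen n))
      (singleton_subset_iff.mpr ⟨hxW, hx₀G n⟩)
    exact ⟨W', hW'open, hsub rfl, hcl⟩
  choose! s hs1 hs2 hs3 using hstep
  set W : ℕ → Set B := fun n => Nat.rec (s 0 univ) (fun n Wn => s (n + 1) Wn) n with hW
  have hbase : ∀ n, IsOpen (W n) ∧ x₀ ∈ W n := by
    intro n
    induction n with
    | zero => exact ⟨hs1 0 univ isOpen_univ (mem_univ _), hs2 0 univ isOpen_univ (mem_univ _)⟩
    | succ n ih => exact ⟨hs1 (n + 1) (W n) ih.1 ih.2, hs2 (n + 1) (W n) ih.1 ih.2⟩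
  have hWopen : ∀ n, IsOpen (W n) := fun n => (hbase n).1
  have hWx : ∀ n, x₀ ∈ W n := fun n => (hbase n).2
  have hcl0 : closure (W 0) ⊆ univ ∩ G 0 := hs3 0 univ isOpen_univ (mem_univ _)
  have hclS : ∀ n, closure (W (n + 1)) ⊆ W n ∩ G (n + 1) :=
    fun n => hs3 (n + 1) (W n) (hWopen n) (hWx n)
  set F : Set B := ⋂ n, closure (W n) with hF
  have hFW : ∀ n, F ⊆ W n := fun n x hx =>
    ((hclS n) (mem_iInter.mp hx (n + 1))).1
  have hFG : ∀ n, F ⊆ G n := by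
    intro n
    cases n with
    | zero => exact fun x hx => (hcl0 (mem_iInter.mp hx 0)).2
    | succ n => exact fun x hx => ((hclS n) (mem_iInter.mp hx (n + 1))).2
  have hFrange : F ⊆ range e := by
    intro x hx
    rw [hGeq]
    exact mem_iInter.mpr fun n => hFG n hx
  have hFclosed : IsClosed F := isClosed_iInter fun n => isClosed_closure
  have hFcompact : IsCompact F := hFclosed.isCompact
  have hx₀F : x₀ ∈ F := mem_iInter.mpr fun n => subset_closure (hWx n)
  -- countable character of F in B
  have hchar : ∀ V' : Set B, IsOpen V' → F ⊆ V' → ∃ n, closure (W n) ⊆ V' := by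
    intro V' hV' hFV'
    by_contra hcon
    push_neg at hcon
    have hne : ∀ n, (closure (W n) \ V').Nonempty := by
      intro n
      obtain ⟨x, hx, hxV⟩ := not_subset.mp (hcon n)
      exact ⟨x, hx, hxV⟩
    have hdec : ∀ n, closure (W (n + 1)) \ V' ⊆ closure (W n) \ V' := by
      intro n x hx
      exact ⟨subset_closure ((hclS n hx.1).1), hx.2⟩
    have hclosed : ∀ n, IsClosed (closure (W n) \ V') :=
      fun n => isClosed_closure.sdiff hV'
    have := IsCompact.nonempty_iInter_of_sequence_nonempty_isCompact_isClosed
      (fun n => closure (W n) \ V') hdec hne ((hclosed 0).isCompact) hclosed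
    obtain ⟨x, hx⟩ := this
    have hxF : x ∈ F := mem_iInter.mpr fun n => (mem_iInter.mp hx n).1
    exact (mem_iInter.mp hx 0).2 (hFV' hxF)
  -- pull back to X
  refine ⟨e ⁻¹' F, ⟨pt, hx₀F⟩, ?_, ?_⟩
  · rw [hemb.isCompact_iff, image_preimage_eq_of_subset hFrange]
    exact hFcompact
  · refine ⟨fun n => e ⁻¹' (W n), fun n => ⟨(hWopen n).preimage hemb.continuous,
      preimage_mono (hFW n)⟩, ?_⟩
    intro V hV hFV
    rw [hemb.eq_induced] at hV
    obtain ⟨V', hV'open, hV'eq⟩ := isOpen_induced_iff.mp hV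
    have hFV' : F ⊆ V' := by
      intro x hx
      obtain ⟨y, rfl⟩ := hFrange hx
      have : y ∈ V := hFV hx
      rw [← hV'eq] at this
      exact this
    obtain ⟨n, hn⟩ := hchar V' hV'open hFV'
    exact ⟨n, by rw [← hV'eq]; exact fun y hy => hn (subset_closure hy)⟩
end

section
/- Let X be a Tychonoff space, Z a dense subspace of an open set U ⊆ X, and F a compact subset of Z having countable character in Z. Then F has countable character in X. -/
open Set

/-- if `Z` is dense in an open set `U ⊆ X` and `F ⊆ Z` is compact with
countable character in the subspace `Z`, then `F` has countable character in `X`. -/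
theorem stmt15 {X : Type*} [TopologicalSpace X] [T35Space X]
    (U Z F : Set X) (hU : IsOpen U) (hZU : Z ⊆ U) (hdense : U ⊆ closure Z)
    (hFZ : F ⊆ Z) (hF : IsCompact F)
    (hχ : HasCountableChar ((Subtype.val ⁻¹' F) : Set Z)) :
    HasCountableChar F := by
  obtain ⟨V, hV, hVbase⟩ := hχ
  -- choose open W n in X with V n = val ⁻¹' W n
  have hWex : ∀ n, ∃ W : Set X, IsOpen W ∧ Subtype.val ⁻¹' W = V n := fun n =>
    isOpen_induced_iff.mp (hV n).1
  choose W hWopen hWV using hWex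
  refine ⟨fun n => W n ∩ U, fun n => ⟨(hWopen n).inter hU, fun x hx =>
    ⟨?_, hZU (hFZ hx)⟩⟩, ?_⟩
  · have := (hV n).2 (show (⟨x, hFZ hx⟩ : Z) ∈ Subtype.val ⁻¹' F from hx)
    rw [← hWV n] at this
    exact this
  · intro O hO hFO
    -- regularity: get open G with F ⊆ G, closure G ⊆ O ∩ U
    obtain ⟨G, hGopen, hFG, hGcl⟩ := hF.exists_isOpen_closure_subset
      (((hO.inter hU).mem_nhdsSet).mpr (subset_inter hFO fun x hx => hZU (hFZ hx)))
    have : Subtype.val ⁻¹' F ⊆ (Subtype.val ⁻¹' G : Set Z) := fun x hx => hFG hx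
    obtain ⟨n, hn⟩ := hVbase _ (hGopen.preimage continuous_subtype_val) this
    refine ⟨n, fun x ⟨hxW, hxU⟩ => ?_⟩
    -- x ∈ closure Z and W n ∩ U open nbhd of x ⇒ x ∈ closure (W n ∩ Z)
    have hxcl : x ∈ closure (W n ∩ U ∩ Z) := by
      have hd := hdense hxU
      rw [mem_closure_iff] at hd ⊢
      intro o ho hxo
      obtain ⟨y, hy1, hy2⟩ := hd (o ∩ (W n ∩ U)) (ho.inter ((hWopen n).inter hU))
        ⟨hxo, hxW, hxU⟩
      exact ⟨y, hy1.1, hy1.2, hy2⟩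
    have hsub : W n ∩ U ∩ Z ⊆ G := by
      rintro y ⟨⟨hyW, hyU⟩, hyZ⟩
      have : (⟨y, hyZ⟩ : Z) ∈ V n := by rw [← hWV n]; exact hyW
      exact hn this
    have : x ∈ closure G := closure_mono hsub hxcl
    exact (hGcl this).1
end

section
/- If G is a non-locally compact paratopological group with some remainder failing the Baire property, then G is of countable type, and hence every remainder of G is Lindelöf. -/
open Set Pointwise

universe u

/-- A space is of countable type if every compact subset is contained in a compact
subset having countable character. -/
def CountableType (X : Type*) [TopologicalSpace X] : Prop :=
  ∀ K : Set X, IsCompact K → ∃ K' : Set X, IsCompact K' ∧ K ⊆ K' ∧ HasCountableChar K'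

/-- The set of `x` such that `D * {x} ⊆ W` is open, for `D` compact. -/
lemma isOpen_mulSet {G : Type u} [TopologicalSpace G] [Group G] [ContinuousMul G]
    {D W : Set G} (hD : IsCompact D) (hW : IsOpen W) :
    IsOpen {x : G | ∀ d ∈ D, d * x ∈ W} := by
  rw [isOpen_iff_forall_mem_open]
  intro x hx
  have hn : IsOpen ((fun p : G × G => p.1 * p.2) ⁻¹' W) := hW.preimage continuous_mul
  have hsub : D ×ˢ ({x} : Set G) ⊆ (fun p : G × G => p.1 * p.2) ⁻¹' W := by
    rintro ⟨d, y⟩ ⟨hd, hy⟩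
    rcases hy with rfl
    exact hx d hd
  obtain ⟨u, v, hu, hv, hDu, hxv, huv⟩ :=
    generalized_tube_lemma hD isCompact_singleton hn hsub
  refine ⟨v, ?_, hv, hxv rfl⟩
  intro y hy d hd
  exact huv (show (d, y) ∈ u ×ˢ v from ⟨hDu hd, hy⟩)

/-- From one nonempty compact set of countable character, a paratopological group
is of countable type. -/
lemma countableType_of_compact_char {G : Type u} [TopologicalSpace G] [Group G]
    [ContinuousMul G] {K0 : Set G} (hK0 : IsCompact K0) (hne : K0.Nonempty)
    (hchar : HasCountableChar K0) : CountableType G := by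
  obtain ⟨k0, hk0⟩ := hne
  obtain ⟨U, hU1, hU2⟩ := hchar
  intro C hC
  set D : Set G := C * ({k0⁻¹} : Set G) with hD
  have hDc : IsCompact D := hC.mul isCompact_singleton
  refine ⟨D * K0, hDc.mul hK0, ?_, ⟨fun n => D * U n, fun n => ?_, ?_⟩⟩
  · intro c hcC
    have : c = (c * k0⁻¹) * k0 := by group
    rw [this]
    exact Set.mul_mem_mul (Set.mul_mem_mul hcC rfl) hk0
  · exact ⟨((hU1 n).1).mul_left, Set.mul_subset_mul_left (hU1 n).2⟩
  · intro W hWo hWsub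
    have hT : IsOpen {x : G | ∀ d ∈ D, d * x ∈ W} := isOpen_mulSet hDc hWo
    have hKT : K0 ⊆ {x : G | ∀ d ∈ D, d * x ∈ W} := fun k hk d hd =>
      hWsub (Set.mul_mem_mul hd hk)
    obtain ⟨n, hn⟩ := hU2 _ hT hKT
    refine ⟨n, ?_⟩
    rintro y hy
    obtain ⟨d, hd, u, hu, rfl⟩ := hy
    exact hn hu d hd

/-- Transfer countable character down along an embedding. -/
lemma char_preimage {G B : Type u} [TopologicalSpace G] [TopologicalSpace B]
    {e : G → B} (he : Topology.IsEmbedding e) {K : Set B} (hK : K ⊆ Set.range e)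
    (h : HasCountableChar K) : HasCountableChar (e ⁻¹' K) := by
  obtain ⟨U, hU1, hU2⟩ := h
  refine ⟨fun n => e ⁻¹' (U n), fun n => ⟨(hU1 n).1.preimage he.continuous,
    Set.preimage_mono (hU1 n).2⟩, ?_⟩
  intro V hV hKV
  obtain ⟨O, hO, rfl⟩ := he.toIsInducing.isOpen_iff.mp hV
  have hKO : K ⊆ O := by
    intro x hx
    obtain ⟨g, rfl⟩ := hK hx
    exact hKV hx
  obtain ⟨n, hn⟩ := hU2 O hO hKO
  exact ⟨n, Set.preimage_mono hn⟩

/-- Transfer countable character up along a dense embedding into a compact Hausdorff space. -/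
lemma char_image {G B : Type u} [TopologicalSpace G] [TopologicalSpace B]
    [CompactSpace B] [T2Space B] {e : G → B} (he : Topology.IsEmbedding e)
    (hd : DenseRange e) {K : Set G} (hK : IsCompact K)
    (h : HasCountableChar K) : HasCountableChar (e '' K) := by
  obtain ⟨U, hU1, hU2⟩ := h
  have hex : ∀ n, ∃ O : Set B, IsOpen O ∧ e ⁻¹' O = U n := fun n =>
    he.toIsInducing.isOpen_iff.mp (hU1 n).1
  choose O hOopen hOeq using hex
  have hKO : ∀ n, e '' K ⊆ O n := by
    intro n x hx
    obtain ⟨g, hg, rfl⟩ := hx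
    have : g ∈ U n := (hU1 n).2 hg
    rw [← hOeq n] at this
    exact this
  refine ⟨O, fun n => ⟨hOopen n, hKO n⟩, ?_⟩
  intro W hWo hWsub
  have hKc : IsClosed (e '' K) := (hK.image he.continuous).isClosed
  obtain ⟨O2, hO2o, hO2s, hO2c⟩ := normal_exists_closure_subset hKc hWo hWsub
  have hpre : K ⊆ e ⁻¹' O2 := fun g hg => hO2s ⟨g, hg, rfl⟩
  obtain ⟨n, hn⟩ := hU2 _ (hO2o.preimage he.continuous) hpre
  refine ⟨n, ?_⟩
  have h1 : O n ⊆ closure (O n ∩ Set.range e) :=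
    hd.open_subset_closure_inter (hOopen n)
  have h2 : O n ∩ Set.range e ⊆ O2 := by
    rintro x ⟨hxO, g, rfl⟩
    have : g ∈ U n := by rw [← hOeq n]; exact hxO
    exact hn this
  calc O n ⊆ closure (O n ∩ Set.range e) := h1
    _ ⊆ closure O2 := closure_mono h2
    _ ⊆ W := hO2c

/-- Countable type implies every remainder is Lindelöf (Henriksen–Isbell, one direction). -/
lemma lindelof_remainder {G B' : Type u} [TopologicalSpace G] (hct : CountableType G)
    [TopologicalSpace B'] [CompactSpace B'] [T2Space B'] {e' : G → B'}
    (he' : Topology.IsEmbedding e') (hd' : DenseRange e') :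
    LindelofSpace ((Set.range e')ᶜ : Set B') := by
  rw [← isLindelof_iff_LindelofSpace]
  rw [isLindelof_iff_countable_subcover]
  intro ι Uc hUo hcov
  set F : Set B' := (⋃ i, Uc i)ᶜ with hF
  have hFclosed : IsClosed F := (isOpen_iUnion hUo).isClosed_compl
  have hFrange : F ⊆ Set.range e' := by
    intro x hx
    by_contra hxr
    exact hx (hcov hxr)
  have hCc : IsCompact (e' ⁻¹' F) := by
    rw [he'.isCompact_iff]
    rw [Set.image_preimage_eq_inter_range, Set.inter_eq_left.mpr hFrange]
    exact hFclosed.isCompact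
  obtain ⟨K', hK'c, hK'sub, hK'char⟩ := hct _ hCc
  have hchar' : HasCountableChar (e' '' K') := char_image he' hd' hK'c hK'char
  obtain ⟨O, hO1, hO2⟩ := hchar'
  have hFO : ∀ n, F ⊆ O n := by
    intro n x hx
    obtain ⟨g, rfl⟩ := hFrange hx
    exact (hO1 n).2 ⟨g, hK'sub hx, rfl⟩
  have hsubcov : ∀ n, ∃ s : Finset ι, (O n)ᶜ ⊆ ⋃ i ∈ s, Uc i := by
    intro n
    refine ((hO1 n).1.isClosed_compl.isCompact).elim_finite_subcover Uc hUo ?_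
    intro x hx
    by_contra hxc
    exact hx (hFO n hxc)
  choose s hs using hsubcov
  refine ⟨⋃ n, (s n : Set ι), countable_iUnion fun n => (s n).countable_toSet, ?_⟩
  intro y hy
  have hyK : y ∉ e' '' K' := by
    intro hyK
    obtain ⟨g, _, rfl⟩ := hyK
    exact hy ⟨g, rfl⟩
  have hsep : ∃ n, y ∉ O n := by
    have hKcl : IsClosed (e' '' K') := (hK'c.image he'.continuous).isClosed
    obtain ⟨u, huo, hus, huc⟩ := normal_exists_closure_subset hKcl
      (isOpen_compl_singleton) (by simpa using hyK)
    obtain ⟨n, hn⟩ := hO2 u huo hus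
    refine ⟨n, fun hyO => ?_⟩
    exact (huc (subset_closure (hn hyO))) rfl
  obtain ⟨n, hn⟩ := hsep
  have : y ∈ ⋃ i ∈ s n, Uc i := hs n hn
  simp only [Set.mem_iUnion] at this ⊢
  obtain ⟨i, hi, hyi⟩ := this
  exact ⟨i, ⟨n, hi⟩, hyi⟩

/-- If `G` is not locally compact, the remainder is dense. -/
lemma dense_remainder {G B : Type u} [TopologicalSpace G] [T35Space G] [Group G]
    [ContinuousMul G] [TopologicalSpace B] [CompactSpace B] [T2Space B]
    (hnlc : ¬ LocallyCompactSpace G) {e : G → B} (he : Topology.IsEmbedding e)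
    (hd : DenseRange e) : Dense ((Set.range e)ᶜ : Set B) := by
  by_contra h
  rw [dense_iff_inter_open] at h
  push_neg at h
  obtain ⟨U, hUo, hUne, hUdisj⟩ := h
  have hUsub : U ⊆ Set.range e := by
    intro x hx
    by_contra hxr
    exact Set.eq_empty_iff_forall_notMem.mp hUdisj x ⟨hx, hxr⟩
  apply hnlc
  haveI : WeaklyLocallyCompactSpace G := by
    obtain ⟨b, hb⟩ := hUne
    obtain ⟨t, htn, htc, hts⟩ := exists_mem_nhds_isClosed_subset (hUo.mem_nhds hb)
    have htK : IsCompact t := htc.isCompact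
    have htG : t ⊆ Set.range e := hts.trans hUsub
    obtain ⟨g0, hg0⟩ := hUsub hb
    have hN : IsCompact (e ⁻¹' t) := by
      rw [he.isCompact_iff, Set.image_preimage_eq_inter_range, Set.inter_eq_left.mpr htG]
      exact htK
    have hNmem : e ⁻¹' t ∈ nhds g0 := by
      apply he.continuous.continuousAt.preimage_mem_nhds
      rw [hg0]; exact htn
    refine ⟨fun g => ?_⟩
    let φ : G ≃ₜ G := Homeomorph.mulLeft (g * g0⁻¹)
    have hφ : φ g0 = g := by
      show g * g0⁻¹ * g0 = g
      group
    refine ⟨φ '' (e ⁻¹' t), hN.image φ.continuous, ?_⟩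
    rw [← hφ, ← φ.map_nhds_eq g0]
    exact Filter.image_mem_map hNmem
  infer_instance

/-- Iterating a set-shrinking function. -/
def natRecSet {B : Type u} (F : Set B → ℕ → Set B) (U : Set B) : ℕ → Set B
  | 0 => F U 0
  | n+1 => F (natRecSet F U n) (n+1)

/-- The intersection of a decreasing sequence of closures of open sets has countable
character in a compact space. -/
lemma char_iInter_closure {B : Type u} [TopologicalSpace B] [CompactSpace B]
    {V : ℕ → Set B} (hVo : ∀ n, IsOpen (V n)) (hdec : ∀ n, closure (V (n+1)) ⊆ V n) :
    HasCountableChar (⋂ n, closure (V n)) := by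
  have hsub : ∀ n, (⋂ m, closure (V m)) ⊆ V n := fun n =>
    (Set.iInter_subset _ (n+1)).trans (hdec n)
  refine ⟨V, fun n => ⟨hVo n, hsub n⟩, ?_⟩
  intro O hOo hOsub
  have hcpt : IsCompact Oᶜ := hOo.isClosed_compl.isCompact
  have hanti : Antitone fun n => closure (V n) := antitone_nat_of_succ_le fun n =>
    (hdec n).trans subset_closure
  have hempty : (Oᶜ ∩ ⋂ n, closure (V n)) = ∅ := by
    rw [Set.eq_empty_iff_forall_notMem]
    rintro x ⟨hxO, hxI⟩
    exact hxO (hOsub hxI)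
  obtain ⟨n, hn⟩ := hcpt.elim_directed_family_closed (fun n => closure (V n))
    (fun n => isClosed_closure) hempty hanti.directed_ge
  refine ⟨n, fun x hx => ?_⟩
  by_contra hxO
  exact Set.eq_empty_iff_forall_notMem.mp hn x ⟨hxO, subset_closure hx⟩

lemma natRecSet_zero {B : Type u} (F : Set B → ℕ → Set B) (U : Set B) :
    natRecSet F U 0 = F U 0 := rfl

lemma natRecSet_succ {B : Type u} (F : Set B → ℕ → Set B) (U : Set B) (n : ℕ) :
    natRecSet F U (n+1) = F (natRecSet F U n) (n+1) := rfl

/-- The key step: a non-Baire remainder yields a nonempty compact subset of `G` of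
countable character. -/
lemma exists_compact_char {G B : Type u} [TopologicalSpace G] [T35Space G] [Group G]
    [ContinuousMul G] [TopologicalSpace B] [CompactSpace B] [T2Space B]
    (hnlc : ¬ LocallyCompactSpace G)
    {e : G → B} (he : Topology.IsEmbedding e) (hd : DenseRange e)
    (hY : ¬ BaireSpace ((Set.range e)ᶜ : Set B)) :
    ∃ K0 : Set G, IsCompact K0 ∧ K0.Nonempty ∧ HasCountableChar K0 := by
  set Y : Set B := (Set.range e)ᶜ with hYdef
  have hdY : Dense Y := dense_remainder hnlc he hd
  have hbaire : ¬ ∀ f : ℕ → Set ↥Y, (∀ n, IsOpen (f n)) → (∀ n, Dense (f n)) →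
      Dense (⋂ n, f n) := fun h => hY ⟨h⟩
  push_neg at hbaire
  obtain ⟨f, hfo, hfd, hfnd⟩ := hbaire
  have hOex : ∀ n, ∃ O : Set B, IsOpen O ∧ (Subtype.val ⁻¹' O : Set ↥Y) = f n := fun n =>
    Topology.IsInducing.subtypeVal.isOpen_iff.mp (hfo n)
  choose O hOo hOeq using hOex
  rw [dense_iff_inter_open] at hfnd
  push_neg at hfnd
  obtain ⟨W, hWo, hWne, hWdisj⟩ := hfnd
  obtain ⟨U, hUo, hUeq⟩ := Topology.IsInducing.subtypeVal.isOpen_iff.mp hWo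
  set F : ℕ → Set B := fun n => Y \ O n with hFdef
  set K : ℕ → Set B := fun n => closure (F n) with hKdef
  have hKcl : ∀ n, IsClosed (K n) := fun n => isClosed_closure
  have hKnd : ∀ n, interior (K n) = ∅ := by
    intro n
    by_contra h
    have hne : (interior (K n)).Nonempty := Set.nonempty_iff_ne_empty.mpr h
    obtain ⟨y0, hy0V, hy0Y⟩ := dense_iff_inter_open.mp hdY _ isOpen_interior hne
    have hpre_open : IsOpen (Subtype.val ⁻¹' interior (K n) : Set ↥Y) :=
      isOpen_interior.preimage continuous_subtype_val
    have hpre_ne : (Subtype.val ⁻¹' interior (K n) : Set ↥Y).Nonempty := ⟨⟨y0, hy0Y⟩, hy0V⟩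
    obtain ⟨⟨y, hyY⟩, hyV, hyf⟩ := dense_iff_inter_open.mp (hfd n) _ hpre_open hpre_ne
    have hyO : y ∈ O n := by
      rw [← hOeq n] at hyf
      exact hyf
    have hyK : y ∈ closure (F n) := interior_subset hyV
    obtain ⟨z, hzO, hzF⟩ := mem_closure_iff.mp hyK (O n) (hOo n) hyO
    exact hzF.2 hzO
  have hcover : U ∩ Y ⊆ ⋃ n, K n := by
    rintro y ⟨hyU, hyY⟩
    have hyW : (⟨y, hyY⟩ : ↥Y) ∈ W := by
      rw [← hUeq]
      exact hyU
    have hynot : (⟨y, hyY⟩ : ↥Y) ∉ ⋂ n, f n := fun hmem =>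
      Set.eq_empty_iff_forall_notMem.mp hWdisj _ ⟨hyW, hmem⟩
    rw [Set.mem_iInter] at hynot
    push_neg at hynot
    obtain ⟨n, hn⟩ := hynot
    have hyO : y ∉ O n := fun h => hn (by rw [← hOeq n]; exact h)
    exact Set.mem_iUnion.mpr ⟨n, subset_closure ⟨hyY, hyO⟩⟩
  have hUne : U.Nonempty := by
    obtain ⟨⟨y, hyY⟩, hyW⟩ := hWne
    rw [← hUeq] at hyW
    exact ⟨y, hyW⟩
  have hdense : ∀ n, Dense ((K n)ᶜ) := fun n => interior_eq_empty_iff_dense_compl.mp (hKnd n)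
  have hGdelta : Dense (⋂ n, (K n)ᶜ) :=
    dense_iInter_of_isOpen (fun n => (hKcl n).isOpen_compl) hdense
  obtain ⟨x, hxU, hxKi⟩ := dense_iff_inter_open.mp hGdelta U hUo hUne
  have hxKn : ∀ n, x ∉ K n := fun n => Set.mem_iInter.mp hxKi n
  have hxrange : x ∈ Set.range e := by
    by_contra hxY
    obtain ⟨n, hn⟩ := Set.mem_iUnion.mp (hcover ⟨hxU, hxY⟩)
    exact hxKn n hn
  have key : ∀ (A : Set B) (n : ℕ), ∃ V : Set B, (IsOpen A ∧ x ∈ A) →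
      IsOpen V ∧ x ∈ V ∧ closure V ⊆ A ∧ closure V ∩ K n = ∅ := by
    intro A n
    by_cases hA : IsOpen A ∧ x ∈ A
    · have hnbd : A ∩ (K n)ᶜ ∈ nhds x :=
        (hA.1.inter (hKcl n).isOpen_compl).mem_nhds ⟨hA.2, hxKn n⟩
      obtain ⟨t, htn, htc, hts⟩ := exists_mem_nhds_isClosed_subset hnbd
      refine ⟨interior t, fun _ => ⟨isOpen_interior, mem_interior_iff_mem_nhds.mpr htn, ?_, ?_⟩⟩
      · exact (closure_minimal interior_subset htc).trans (hts.trans Set.inter_subset_left)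
      · rw [Set.eq_empty_iff_forall_notMem]
        rintro z ⟨hz1, hz2⟩
        exact (hts (closure_minimal interior_subset htc hz1)).2 hz2
    · exact ⟨∅, fun h => absurd h hA⟩
  choose Vf hVf using key
  set V : ℕ → Set B := natRecSet Vf U with hVdef
  have hVinv : ∀ n, IsOpen (V n) ∧ x ∈ V n := by
    intro n
    induction n with
    | zero =>
      rw [hVdef, natRecSet_zero]
      exact ⟨(hVf U 0 ⟨hUo, hxU⟩).1, (hVf U 0 ⟨hUo, hxU⟩).2.1⟩
    | succ n ih =>
      rw [hVdef] at ih ⊢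
      rw [natRecSet_succ]
      exact ⟨(hVf _ (n+1) ih).1, (hVf _ (n+1) ih).2.1⟩
  have hV0 : closure (V 0) ⊆ U ∧ closure (V 0) ∩ K 0 = ∅ := by
    rw [hVdef, natRecSet_zero]
    exact ⟨(hVf U 0 ⟨hUo, hxU⟩).2.2.1, (hVf U 0 ⟨hUo, hxU⟩).2.2.2⟩
  have hVsucc : ∀ n, closure (V (n+1)) ⊆ V n ∧ closure (V (n+1)) ∩ K (n+1) = ∅ := by
    intro n
    have ih := hVinv n
    rw [hVdef] at ih ⊢
    rw [natRecSet_succ]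
    exact ⟨(hVf _ (n+1) ih).2.2.1, (hVf _ (n+1) ih).2.2.2⟩
  set K0B : Set B := ⋂ n, closure (V n) with hK0Bdef
  have hK0Bc : IsCompact K0B := (isClosed_iInter fun _ => isClosed_closure).isCompact
  have hxK0B : x ∈ K0B := Set.mem_iInter.mpr fun n => subset_closure (hVinv n).2
  have hK0Brange : K0B ⊆ Set.range e := by
    intro y hy
    by_contra hyY
    have hyU : y ∈ U := hV0.1 (Set.mem_iInter.mp hy 0)
    obtain ⟨n, hn⟩ := Set.mem_iUnion.mp (hcover ⟨hyU, hyY⟩)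
    cases n with
    | zero => exact Set.eq_empty_iff_forall_notMem.mp hV0.2 y ⟨Set.mem_iInter.mp hy 0, hn⟩
    | succ m =>
      exact Set.eq_empty_iff_forall_notMem.mp (hVsucc m).2 y ⟨Set.mem_iInter.mp hy (m+1), hn⟩
  have hcharB : HasCountableChar K0B :=
    char_iInter_closure (fun n => (hVinv n).1) (fun n => (hVsucc n).1)
  refine ⟨e ⁻¹' K0B, ?_, ?_, char_preimage he hK0Brange hcharB⟩
  · rw [he.isCompact_iff, Set.image_preimage_eq_inter_range, Set.inter_eq_left.mpr hK0Brange]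
    exact hK0Bc
  · obtain ⟨g, hg⟩ := hxrange
    exact ⟨g, by rw [Set.mem_preimage, hg]; exact hxK0B⟩

/-- if `G` is a non-locally compact paratopological group with some
remainder failing the Baire property, then `G` is of countable type, and hence every
remainder of `G` is Lindelöf. -/
theorem stmt17 {G B : Type u} [TopologicalSpace G] [T35Space G] [Group G] [ContinuousMul G]
    [TopologicalSpace B] [CompactSpace B] [T2Space B]
    (hnlc : ¬ LocallyCompactSpace G)
    (e : G → B) (he : Topology.IsEmbedding e) (hd : DenseRange e)
    (hY : ¬ BaireSpace ((Set.range e)ᶜ : Set B)) :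
    CountableType G ∧
      ∀ (B' : Type u) (tB' : TopologicalSpace B') (e' : G → B'),
        CompactSpace B' → T2Space B' → Topology.IsEmbedding e' → DenseRange e' →
          LindelofSpace ((Set.range e')ᶜ : Set B') := by

  obtain ⟨K0, hK0c, hK0ne, hK0char⟩ := exists_compact_char hnlc he hd hY
  have hct : CountableType G := countableType_of_compact_char hK0c hK0ne hK0char
  refine ⟨hct, ?_⟩
  intro B' tB' e' hcpt ht2 he' hd'
  exact lindelof_remainder hct he' hd'
end
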